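/- arXiv:2502.03414 — 2 statements merged into one kernel-verified Lean document; each statement's English description precedes it below -/
import Mathlib

section
/- Doubly robust identification under a misspecified propensity score: suppose π⁰_i(X_i; ḡ_t), π⁰_i(X_i; ḡ'_t) are arbitrary measurable functions bounded in (ε, 1−ε), and μ_{i,ḡ'_t,δ}(X_i) = E[Δ_δ Y_i | X_i, Ḡ_it = ḡ'_t] is the true outcome regression. Then for each i, E[(h_{i1}(Ḡ_it) − h⁰_{i0}(Ḡ_it, X_i))·(Δ_δ Y_i − μ_{i,ḡ'_t,δ}(X_i))] = E[Δ_δ Y_i | Ḡ_it = ḡ_t] − E[μ_{i,ḡ'_t,δ}(X_i) | Ḡ_it = ḡ_t], where h_{i1}(Ḡ) = 1(Ḡ=ḡ_t)/P(Ḡ_it=ḡ_t) and h⁰_{i0}(Ḡ, X) = 1(Ḡ=ḡ'_t)π⁰(X;ḡ_t) / (π⁰(X;ḡ'_t)·E[1(Ḡ_it=ḡ'_t)π⁰(X_i;ḡ_t)/π⁰(X_i;ḡ'_t)]). That is, the misspecified-propensity weighted moment recovers the outcome-regression identified quantity. -/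
open MeasureTheory

lemma drm_aux_integrable {Ω : Type*} [MeasurableSpace Ω] (P : Measure Ω)
    [IsFiniteMeasure P] (f : Ω → ℝ) (hf : AEStronglyMeasurable f P) (C : ℝ)
    (h : ∀ ω, |f ω| ≤ C) : Integrable f P :=
  (integrable_const C).mono' hf (ae_of_all _ h)

lemma drm_aux_ind_mul {Ω : Type*} [MeasurableSpace Ω] (P : Measure Ω)
    (s : Set Ω) (hs : MeasurableSet s) (φ : Ω → ℝ) :
    ∫ ω, s.indicator (fun _ => (1:ℝ)) ω * φ ω ∂P = ∫ ω in s, φ ω ∂P := by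
  rw [← integral_indicator hs]
  congr 1; funext ω
  by_cases h : ω ∈ s <;>
    simp [Set.indicator_of_mem, Set.indicator_of_notMem, h]

/-- Doubly robust identification under a misspecified propensity
score: if `π⁰(·; ḡ_t), π⁰(·; ḡ'_t)` are arbitrary measurable functions bounded in
`(ε, 1−ε)` and `μ(X) = E[Δ_δY | X, Ḡ = ḡ'_t]` is the true outcome regression
(characterized against bounded measurable test functions of `X`), then
`E[(h₁(Ḡ) − h⁰₀(Ḡ, X))·(Δ_δY − μ(X))] = E[Δ_δY | Ḡ = ḡ_t] − E[μ(X) | Ḡ = ḡ_t]`,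
where `h₁(Ḡ) = 1(Ḡ=ḡ_t)/P(Ḡ=ḡ_t)` and
`h⁰₀(Ḡ,X) = 1(Ḡ=ḡ'_t)π⁰(X;ḡ_t)/(π⁰(X;ḡ'_t)·E[1(Ḡ=ḡ'_t)π⁰(X;ḡ_t)/π⁰(X;ḡ'_t)])`. -/
theorem doubly_robust_misspecified_propensity
    {Ω : Type*} [MeasurableSpace Ω] (P : Measure Ω) [IsProbabilityMeasure P]
    {𝒢 : Type*} [MeasurableSpace 𝒢] [MeasurableSingletonClass 𝒢]
    {𝒳 : Type*} [MeasurableSpace 𝒳]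
    (ΔY : Ω → ℝ) (hΔY : Integrable ΔY P) (hΔYb : ∃ C, ∀ ω, |ΔY ω| ≤ C)
    (G : Ω → 𝒢) (hG : Measurable G) (X : Ω → 𝒳) (hX : Measurable X)
    (g g' : 𝒢)
    (hp : 0 < (P {ω | G ω = g}).toReal) (hp' : 0 < (P {ω | G ω = g'}).toReal)
    (ε : ℝ) (hε : 0 < ε)
    -- arbitrary (possibly misspecified) propensity functions, bounded in (ε, 1−ε)
    (π0g π0g' : 𝒳 → ℝ) (hπ0gmeas : Measurable π0g) (hπ0g'meas : Measurable π0g')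
    (hπ0gb : ∀ x, ε < π0g x ∧ π0g x < 1 - ε)
    (hπ0g'b : ∀ x, ε < π0g' x ∧ π0g' x < 1 - ε)
    -- the true outcome regression μ(X) = E[Δ_δY | X, Ḡ = ḡ'_t]
    (μ : 𝒳 → ℝ) (hμmeas : Measurable μ) (hμb : ∃ C, ∀ x, |μ x| ≤ C)
    (hμ : ∀ f : 𝒳 → ℝ, Measurable f → (∃ C, ∀ x, |f x| ≤ C) →
      ∫ ω in {ω | G ω = g'}, ΔY ω * f (X ω) ∂P
        = ∫ ω in {ω | G ω = g'}, μ (X ω) * f (X ω) ∂P) :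
    (let Ig : Ω → ℝ := Set.indicator {ω' | G ω' = g} (fun _ => (1:ℝ))
     let Ig' : Ω → ℝ := Set.indicator {ω' | G ω' = g'} (fun _ => (1:ℝ))
     let p1 : ℝ := (P {ω | G ω = g}).toReal
     let D : ℝ := ∫ ω, Ig' ω * π0g (X ω) / π0g' (X ω) ∂P
     let h1 : Ω → ℝ := fun ω => Ig ω / p1
     let h0 : Ω → ℝ := fun ω => Ig' ω * π0g (X ω) / (π0g' (X ω) * D)
     ∫ ω, (h1 ω - h0 ω) * (ΔY ω - μ (X ω)) ∂P
       = (∫ ω in {ω | G ω = g}, ΔY ω ∂P) / p1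
         - (∫ ω in {ω | G ω = g}, μ (X ω) ∂P) / p1) := by
  intro Ig Ig' p1 D h1 h0
  obtain ⟨C, hC⟩ := hΔYb
  obtain ⟨Cμ, hCμ⟩ := hμb
  have hA : MeasurableSet {ω | G ω = g} := hG (measurableSet_singleton g)
  have hA' : MeasurableSet {ω | G ω = g'} := hG (measurableSet_singleton g')
  -- the test function
  set f : 𝒳 → ℝ := fun x => π0g x / (π0g' x * D) with hf_def
  have hfmeas : Measurable f := hπ0gmeas.div (hπ0g'meas.mul_const D)
  have hfb : ∀ x, |f x| ≤ (1 - ε) / (ε * |D|) := by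
    intro x
    by_cases hD : D = 0
    · simp [hf_def, hD]
    · have h1x := hπ0gb x
      have h2x := hπ0g'b x
      have hDpos : 0 < |D| := abs_pos.mpr hD
      have habs : |f x| = |π0g x| / (|π0g' x| * |D|) := by
        rw [hf_def]; simp [abs_div, abs_mul]
      rw [habs]
      apply div_le_div₀ (by linarith) _ (by positivity) _
      · rw [abs_of_pos (lt_trans hε h1x.1)]; exact le_of_lt h1x.2
      · have : ε ≤ |π0g' x| := by
          rw [abs_of_pos (lt_trans hε h2x.1)]; exact le_of_lt h2x.1
        exact mul_le_mul_of_nonneg_right this (le_of_lt hDpos)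
  -- indicators take values 0/1
  have hIg : ∀ ω, Ig ω = 0 ∨ Ig ω = 1 := by
    intro ω; by_cases h : ω ∈ {ω' | G ω' = g}
    · right; simp [Ig, Set.indicator_of_mem h]
    · left; simp [Ig, Set.indicator_of_notMem h]
  have hIg' : ∀ ω, Ig' ω = 0 ∨ Ig' ω = 1 := by
    intro ω; by_cases h : ω ∈ {ω' | G ω' = g'}
    · right; simp [Ig', Set.indicator_of_mem h]
    · left; simp [Ig', Set.indicator_of_notMem h]
  have hIgmeas : Measurable Ig := measurable_const.indicator hA
  have hIg'meas : Measurable Ig' := measurable_const.indicator hA'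
  have hh1meas : Measurable h1 := hIgmeas.div measurable_const
  have hh0meas : Measurable h0 :=
    (hIg'meas.mul (hπ0gmeas.comp hX)).div ((hπ0g'meas.comp hX).mul_const D)
  have hh1b : ∀ ω, |h1 ω| ≤ 1 / p1 := by
    intro ω
    rcases hIg ω with h | h
    · simp only [h1, h, zero_div, abs_zero]; positivity
    · simp only [h1, h]
      rw [abs_of_pos (by positivity)]
  have hh0eq : ∀ ω, h0 ω = Ig' ω * f (X ω) := by
    intro ω
    rcases hIg' ω with h | h <;> simp [h0, h, hf_def, mul_div_assoc]
  have hh0b : ∀ ω, |h0 ω| ≤ (1 - ε) / (ε * |D|) := by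
    intro ω
    rw [hh0eq ω]
    rcases hIg' ω with h | h
    · simpa [h] using le_trans (abs_nonneg (f (X ω))) (hfb (X ω))
    · simpa [h] using hfb (X ω)
  -- integrability of the four products
  have int_h1Y : Integrable (fun ω => h1 ω * ΔY ω) P := by
    refine drm_aux_integrable P (fun ω => h1 ω * ΔY ω)
      (hh1meas.aestronglyMeasurable.mul hΔY.1) ((1 / p1) * C) ?_
    intro ω
    rw [abs_mul]
    exact mul_le_mul (hh1b ω) (hC ω) (abs_nonneg _) (by positivity)
  have int_h1μ : Integrable (fun ω => h1 ω * μ (X ω)) P := by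
    refine drm_aux_integrable P (fun ω => h1 ω * μ (X ω))
      ((hh1meas.mul (hμmeas.comp hX)).aestronglyMeasurable) ((1 / p1) * Cμ) ?_
    intro ω
    rw [abs_mul]
    exact mul_le_mul (hh1b ω) (hCμ (X ω)) (abs_nonneg _) (by positivity)
  have int_h0Y : Integrable (fun ω => h0 ω * ΔY ω) P := by
    refine drm_aux_integrable P (fun ω => h0 ω * ΔY ω)
      (hh0meas.aestronglyMeasurable.mul hΔY.1) ((1 - ε) / (ε * |D|) * C) ?_
    intro ω
    rw [abs_mul]
    refine mul_le_mul (hh0b ω) (hC ω) (abs_nonneg _) ?_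
    exact le_trans (abs_nonneg _) (hh0b ω)
  have int_h0μ : Integrable (fun ω => h0 ω * μ (X ω)) P := by
    refine drm_aux_integrable P (fun ω => h0 ω * μ (X ω))
      ((hh0meas.mul (hμmeas.comp hX)).aestronglyMeasurable) ((1 - ε) / (ε * |D|) * Cμ) ?_
    intro ω
    rw [abs_mul]
    refine mul_le_mul (hh0b ω) (hCμ (X ω)) (abs_nonneg _) ?_
    exact le_trans (abs_nonneg _) (hh0b ω)
  -- the h0 terms cancel (key doubly-robust computation)
  have key : ∫ ω, h0 ω * ΔY ω ∂P = ∫ ω, h0 ω * μ (X ω) ∂P := by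
    have e1 : ∀ ω, h0 ω * ΔY ω = Ig' ω * (ΔY ω * f (X ω)) := fun ω => by
      rw [hh0eq]; ring
    have e2 : ∀ ω, h0 ω * μ (X ω) = Ig' ω * (μ (X ω) * f (X ω)) := fun ω => by
      rw [hh0eq]; ring
    simp only [e1, e2]
    rw [drm_aux_ind_mul P _ hA', drm_aux_ind_mul P _ hA']
    exact hμ f hfmeas ⟨_, hfb⟩
  -- the h1 terms
  have e1 : ∫ ω, h1 ω * ΔY ω ∂P = (∫ ω in {ω | G ω = g}, ΔY ω ∂P) / p1 := by
    have h' : ∀ ω, h1 ω * ΔY ω = Ig ω * ΔY ω / p1 := fun ω => by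
      simp only [h1]; ring
    simp only [h']
    rw [integral_div, drm_aux_ind_mul P _ hA]
  have e2 : ∫ ω, h1 ω * μ (X ω) ∂P = (∫ ω in {ω | G ω = g}, μ (X ω) ∂P) / p1 := by
    have h' : ∀ ω, h1 ω * μ (X ω) = Ig ω * μ (X ω) / p1 := fun ω => by
      simp only [h1]; ring
    simp only [h']
    rw [integral_div, drm_aux_ind_mul P _ hA]
  have expand : ∀ ω, (h1 ω - h0 ω) * (ΔY ω - μ (X ω))
      = (h1 ω * ΔY ω - h1 ω * μ (X ω)) - (h0 ω * ΔY ω - h0 ω * μ (X ω)) :=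
    fun ω => by ring
  have intA : Integrable (fun ω => h1 ω * ΔY ω - h1 ω * μ (X ω)) P :=
    int_h1Y.sub int_h1μ
  have intB : Integrable (fun ω => h0 ω * ΔY ω - h0 ω * μ (X ω)) P :=
    int_h0Y.sub int_h0μ
  simp only [expand]
  rw [integral_sub intA intB, integral_sub int_h1Y int_h1μ,
    integral_sub int_h0Y int_h0μ, key, sub_self, sub_zero, e1, e2]
end

section
/- Conservative-bias structure of the empirical exposure probability estimator: let G_1,…,G_n be {0,1}-valued random variables with p_i = P(G_i = 1), p̄ = (1/n)∑_i p_i, and p̂ = (1/n)∑_i G_i. Suppose p̂ − p̄ → 0 in probability and p̄ ≥ ε > 0 for all n, and let Ψ_1,…,Ψ_n be uniformly bounded reals with means Ψ. Then (1/n)∑_i Ψ_i(p_i − p̂)/p̂ − (1/p̄)·Cov_n(Ψ_i, p_i) → 0 in probability, where Cov_n(Ψ_i, p_i) = (1/n)∑_i Ψ_i p_i − Ψ p̄ is the sample covariance; in particular if all Ψ_i are equal or all p_i are equal, the limit of (1/n)∑_i Ψ_i(p_i − p̂)/p̂ is 0. -/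
open MeasureTheory Filter

lemma aux_bound {n : ℕ} (hn : 1 ≤ n) (Ψ p : Fin n → ℝ) (M ε δ q : ℝ)
    (hε : 0 < ε) (hδ : 0 < δ) (hM : 0 ≤ M)
    (hΨ : ∀ i, |Ψ i| ≤ M) (hpi : ∀ i, ε ≤ p i ∧ p i ≤ 1)
    (hq : |q - (1 / n : ℝ) * ∑ i, p i| < min (ε / 2) (δ * ε ^ 2 / (2 * (M + 1)))) :
    |(1 / n : ℝ) * ∑ i, Ψ i * ((p i - q) / q)
      - ((1 / n : ℝ) * ∑ i, Ψ i * p i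
          - ((1 / n : ℝ) * ∑ i, Ψ i) * ((1 / n : ℝ) * ∑ i, p i))
        / ((1 / n : ℝ) * ∑ i, p i)| < δ := by
  have hn0 : (n : ℝ) ≠ 0 := by positivity
  have hnpos : (0:ℝ) < n := by positivity
  set pb : ℝ := (1 / n : ℝ) * ∑ i, p i with hpbdef
  have hsum : (n : ℝ) * ε ≤ ∑ i, p i := by
    calc (n : ℝ) * ε = ∑ _i : Fin n, ε := by simp [Finset.sum_const, mul_comm]
    _ ≤ ∑ i, p i := Finset.sum_le_sum fun i _ => (hpi i).1
  have hpbε : ε ≤ pb := by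
    rw [hpbdef]
    have := mul_le_mul_of_nonneg_left hsum (by positivity : (0:ℝ) ≤ 1 / n)
    calc ε = (1 / n : ℝ) * ((n : ℝ) * ε) := by field_simp
    _ ≤ (1 / n : ℝ) * ∑ i, p i := this
  have hq1 : |q - pb| < ε / 2 := lt_of_lt_of_le hq (min_le_left _ _)
  have hq2 : |q - pb| < δ * ε ^ 2 / (2 * (M + 1)) := lt_of_lt_of_le hq (min_le_right _ _)
  have hqlb : ε / 2 < q := by
    have := abs_lt.mp hq1
    linarith
  have hqpos : 0 < q := by linarith
  have hpbpos : 0 < pb := lt_of_lt_of_le hε hpbε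
  have hqne : q ≠ 0 := ne_of_gt hqpos
  have hpbne : pb ≠ 0 := ne_of_gt hpbpos
  set S : ℝ := (1 / n : ℝ) * ∑ i, Ψ i * p i with hSdef
  have hSb : |S| ≤ M := by
    have habs : |∑ i, Ψ i * p i| ≤ (n : ℝ) * M := by
      calc |∑ i, Ψ i * p i| ≤ ∑ i, |Ψ i * p i| := Finset.abs_sum_le_sum_abs _ _
      _ ≤ ∑ _i : Fin n, M := by
          refine Finset.sum_le_sum fun i _ => ?_
          rw [abs_mul]
          have hpi1 : |p i| ≤ 1 := by
            rw [abs_of_nonneg (le_trans hε.le (hpi i).1)]; exact (hpi i).2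
          calc |Ψ i| * |p i| ≤ M * 1 := mul_le_mul (hΨ i) hpi1 (abs_nonneg _) hM
          _ = M := mul_one M
      _ = (n : ℝ) * M := by simp [Finset.sum_const, mul_comm]
    rw [hSdef, abs_mul, abs_of_nonneg (by positivity : (0:ℝ) ≤ (1 / n : ℝ))]
    calc (1 / n : ℝ) * |∑ i, Ψ i * p i| ≤ (1 / n : ℝ) * ((n : ℝ) * M) := by
          exact mul_le_mul_of_nonneg_left habs (by positivity)
    _ = M := by field_simp
  have key : (1 / n : ℝ) * ∑ i, Ψ i * ((p i - q) / q)
      - ((1 / n : ℝ) * ∑ i, Ψ i * p i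
          - ((1 / n : ℝ) * ∑ i, Ψ i) * ((1 / n : ℝ) * ∑ i, p i))
        / ((1 / n : ℝ) * ∑ i, p i) = S * (pb - q) / (q * pb) := by
    have hterm : ∀ i ∈ Finset.univ, Ψ i * ((p i - q) / q) = Ψ i * p i * q⁻¹ - Ψ i := by
      intro i _
      field_simp
    have hSpne : (∑ i : Fin n, p i) ≠ 0 := by nlinarith
    rw [Finset.sum_congr rfl hterm, Finset.sum_sub_distrib, ← Finset.sum_mul]
    rw [hSdef, hpbdef]
    field_simp
    ring
  rw [key, abs_div, abs_mul, abs_of_pos (mul_pos hqpos hpbpos)]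
  have h1 : |S| * |pb - q| ≤ M * (δ * ε ^ 2 / (2 * (M + 1))) := by
    have : |pb - q| ≤ δ * ε ^ 2 / (2 * (M + 1)) := by rw [abs_sub_comm]; exact hq2.le
    exact mul_le_mul hSb this (abs_nonneg _) hM
  have h2 : ε ^ 2 / 2 ≤ q * pb := by nlinarith
  have h3 : |S| * |pb - q| / (q * pb) ≤ M * (δ * ε ^ 2 / (2 * (M + 1))) / (ε ^ 2 / 2) :=
    div_le_div₀ (by positivity) h1 (by positivity) h2
  have heq : M * (δ * ε ^ 2 / (2 * (M + 1))) / (ε ^ 2 / 2) = M * δ / (M + 1) := by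
    field_simp
  have h4 : M * δ / (M + 1) < δ := by
    rw [div_lt_iff₀ (by positivity)]
    nlinarith
  calc |S| * |pb - q| / (q * pb) ≤ M * (δ * ε ^ 2 / (2 * (M + 1))) / (ε ^ 2 / 2) := h3
  _ = M * δ / (M + 1) := heq
  _ < δ := h4

/-- Conservative-bias structure of the empirical exposure
probability estimator. For a triangular array of `{0,1}`-valued `G n i` with
`p n i = P(G n i = 1) ∈ [ε, 1]`, `p̄ n = (1/n)∑ᵢ p n i`, empirical frequency
`p̂ n(ω) = (1/n)∑ᵢ G n i (ω)` satisfying `p̂ n − p̄ n → 0` in probability, and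
uniformly bounded reals `Ψ n i`, the quantity `(1/n)∑ᵢ Ψ n i·(p n i − p̂ n)/p̂ n`
converges in probability to `Cov_n(Ψ, p)/p̄ n`; in particular if for each `n` all
`Ψ n i` are equal or all `p n i` are equal, it converges in probability to `0`. -/
theorem empirical_exposure_probability_bias
    {Ω : Type*} [MeasurableSpace Ω] (P : Measure Ω) [IsProbabilityMeasure P]
    (G : (n : ℕ) → Fin n → Ω → ℝ)
    (hGmeas : ∀ n i, Measurable (G n i))
    (hGbin : ∀ n i ω, G n i ω = 0 ∨ G n i ω = 1)
    (p : (n : ℕ) → Fin n → ℝ)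
    (hp : ∀ n i, p n i = (P {ω | G n i ω = 1}).toReal)
    (ε : ℝ) (hε : 0 < ε) (hpb : ∀ n i, ε ≤ p n i ∧ p n i ≤ 1)
    (Ψ : (n : ℕ) → Fin n → ℝ)
    (M : ℝ) (hΨb : ∀ n i, |Ψ n i| ≤ M)
    -- weak law of large numbers for the empirical frequency
    (hwlln : TendstoInMeasure P
      (fun (n : ℕ) (ω : Ω) => (1 / n : ℝ) * ∑ i, G n i ω - (1 / n : ℝ) * ∑ i, p n i)
      atTop (fun _ => (0 : ℝ))) :
    (TendstoInMeasure P
      (fun (n : ℕ) (ω : Ω) =>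
        (1 / n : ℝ) * ∑ i, Ψ n i * ((p n i - (1 / n : ℝ) * ∑ j, G n j ω)
            / ((1 / n : ℝ) * ∑ j, G n j ω))
          - ((1 / n : ℝ) * ∑ i, Ψ n i * p n i
              - ((1 / n : ℝ) * ∑ i, Ψ n i) * ((1 / n : ℝ) * ∑ i, p n i))
            / ((1 / n : ℝ) * ∑ i, p n i))
      atTop (fun _ => (0 : ℝ)))
    ∧ ((∀ n, (∀ i j, Ψ n i = Ψ n j) ∨ (∀ i j, p n i = p n j)) →
       TendstoInMeasure P
        (fun (n : ℕ) (ω : Ω) =>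
          (1 / n : ℝ) * ∑ i, Ψ n i * ((p n i - (1 / n : ℝ) * ∑ j, G n j ω)
              / ((1 / n : ℝ) * ∑ j, G n j ω)))
        atTop (fun _ => (0 : ℝ))) := by
  have hM : 0 ≤ M := le_trans (abs_nonneg _) (hΨb 1 0)
  have h1 : TendstoInMeasure P
      (fun (n : ℕ) (ω : Ω) =>
        (1 / n : ℝ) * ∑ i, Ψ n i * ((p n i - (1 / n : ℝ) * ∑ j, G n j ω)
            / ((1 / n : ℝ) * ∑ j, G n j ω))
          - ((1 / n : ℝ) * ∑ i, Ψ n i * p n i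
              - ((1 / n : ℝ) * ∑ i, Ψ n i) * ((1 / n : ℝ) * ∑ i, p n i))
            / ((1 / n : ℝ) * ∑ i, p n i))
      atTop (fun _ => (0 : ℝ)) := by
    rw [tendstoInMeasure_iff_dist]
    intro δ hδ
    set η : ℝ := min (ε / 2) (δ * ε ^ 2 / (2 * (M + 1))) with hηdef
    have hη : 0 < η := lt_min (by positivity) (by positivity)
    refine tendsto_of_tendsto_of_tendsto_of_le_of_le' tendsto_const_nhds (tendstoInMeasure_iff_dist.mp hwlln η hη)
      (Filter.Eventually.of_forall fun n => zero_le) ?_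
    filter_upwards [eventually_ge_atTop 1] with n hn
    refine measure_mono ?_
    intro ω hω
    simp only [Set.mem_setOf_eq, Real.dist_eq, sub_zero] at hω ⊢
    by_contra hc
    push_neg at hc
    exact absurd hω (not_le.mpr
      (aux_bound hn (Ψ n) (p n) M ε δ ((1 / n : ℝ) * ∑ j, G n j ω) hε hδ hM
        (hΨb n) (hpb n) hc))
  refine ⟨h1, fun h => ?_⟩
  have key : ∀ n : ℕ, ((1 / n : ℝ) * ∑ i, Ψ n i * p n i
      - ((1 / n : ℝ) * ∑ i, Ψ n i) * ((1 / n : ℝ) * ∑ i, p n i)) = 0 := by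
    intro n
    rcases Nat.eq_zero_or_pos n with rfl | hn
    · simp
    have hn0 : (n : ℝ) ≠ 0 := by positivity
    have i0 : Fin n := ⟨0, hn⟩
    rcases h n with hc | hc
    · have h1 : ∑ i, Ψ n i * p n i = Ψ n i0 * ∑ i, p n i := by
        rw [Finset.mul_sum]
        exact Finset.sum_congr rfl fun i _ => by rw [hc i i0]
      have h2 : ∑ i, Ψ n i = (n : ℝ) * Ψ n i0 := by
        rw [Finset.sum_congr rfl fun i _ => hc i i0]
        simp [Finset.sum_const, mul_comm]
      rw [h1, h2]
      field_simp
      ring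
    · have h1 : ∑ i, Ψ n i * p n i = (∑ i, Ψ n i) * p n i0 := by
        rw [Finset.sum_mul]
        exact Finset.sum_congr rfl fun i _ => by rw [hc i i0]
      have h2 : ∑ i, p n i = (n : ℝ) * p n i0 := by
        rw [Finset.sum_congr rfl fun i _ => hc i i0]
        simp [Finset.sum_const, mul_comm]
      rw [h1, h2]
      field_simp
      ring
  refine TendstoInMeasure.congr (fun n => Filter.Eventually.of_forall fun ω => ?_)
    (Filter.Eventually.of_forall fun ω => rfl) h1
  rw [key n, zero_div, sub_zero]
end
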